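/- Let f be a homeomorphism of a compact metric space K and let μ be a nonatomic Borel probability measure compatible with inverse shadowing for f. Then for every point p ∈ supp(μ) and every ε > 0 there exists d > 0 such that for every d-method g = {g_k : k ∈ ℤ} for f there exists a full trajectory {x_k}_{k∈ℤ} of g with dist(x_k, f^k(p)) ≤ ε for all k ∈ ℤ. -/

import Mathlib

open MeasureTheory Filter Topology

/-- `Φ(ε,d,f)`: the set of points `p` such that for every `d`-method `g = {g_k}_{k∈ℤ}` for the
homeomorphism `f` there exists a full trajectory of `g` that `ε`-traces the `f`-orbit of `p`. -/
def Phi {K : Type*} [MetricSpace K] (f : K ≃ₜ K) (ε d : ℝ) : Set K :=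
  {p | ∀ g : ℤ → K → K, (∀ k, Continuous (g k)) → (∀ k z, dist (g k z) (f z) ≤ d) →
    ∃ x : ℤ → K, (∀ k, x (k + 1) = g k (x k)) ∧ ∀ k : ℤ, dist (x k) ((f.toEquiv ^ k) p) ≤ ε}

lemma contPow {K : Type*} [MetricSpace K] (f : K ≃ₜ K) :
    ∀ k : ℤ, Continuous fun z => (f.toEquiv ^ k) z := by
  have h1 : ∀ k : ℤ, (fun z => (f.toEquiv ^ (k + 1)) z) =
      (fun z => (f.toEquiv ^ k) z) ∘ f := by
    intro k; funext z; simp [zpow_add_one, Equiv.Perm.mul_apply]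
  have h2 : ∀ k : ℤ, (fun z => (f.toEquiv ^ (k - 1)) z) =
      (fun z => (f.toEquiv ^ k) z) ∘ f.symm := by
    intro k; funext z; simp [zpow_sub_one, Equiv.Perm.mul_apply]
  intro k
  induction k using Int.induction_on with
  | zero => simpa using continuous_id'
  | succ n ih => rw [h1]; exact ih.comp f.continuous
  | pred n ih => rw [show (-(n:ℤ) - 1) = (-(n:ℤ)) - 1 by ring, h2]; exact ih.comp f.symm.continuous

/-- Lemma 4.3. Let `f` be a homeomorphism of a compact metric space `K` and
`μ` a nonatomic Borel probability measure compatible with inverse shadowing for `f` (for every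
`ε > 0` there is `d > 0` such that every set of positive measure meets `Φ(ε,d,f)`). Then `f`
has the inverse shadowing property on the support of `μ`: for every `p` in the support of `μ`
and every `ε > 0` there is `d > 0` such that every `d`-method for `f` has a full trajectory
`ε`-tracing the `f`-orbit of `p`. -/
theorem stmt14 {K : Type*} [MetricSpace K] [CompactSpace K] [MeasurableSpace K] [BorelSpace K]
    (f : K ≃ₜ K) (μ : Measure K) [IsProbabilityMeasure μ] [MeasureTheory.NullSingletonClass μ]
    (hcompat : ∀ ε > (0 : ℝ), ∃ d > (0 : ℝ), ∀ A : Set K, 0 < μ A →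
      (A ∩ Phi f ε d).Nonempty)
    (p : K) (hp : ∀ U : Set K, IsOpen U → p ∈ U → 0 < μ U) :
    ∀ ε > (0 : ℝ), ∃ d > (0 : ℝ), ∀ g : ℤ → K → K,
      (∀ k, Continuous (g k)) → (∀ k z, dist (g k z) (f z) ≤ d) →
      ∃ x : ℤ → K, (∀ k, x (k + 1) = g k (x k)) ∧ ∀ k : ℤ, dist (x k) ((f.toEquiv ^ k) p) ≤ ε := by
  intro ε hε
  obtain ⟨d, hd, hΦ⟩ := hcompat (ε / 2) (by positivity)
  refine ⟨d, hd, ?_⟩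
  intro g hgc hgd
  set C : ℕ → Set (ℤ → K) := fun n =>
    {x | (∀ k, x (k + 1) = g k (x k)) ∧
      ∀ k : ℤ, |k| ≤ (n : ℤ) → dist (x k) ((f.toEquiv ^ k) p) ≤ ε} with hCdef
  have hC1 : ∀ n, C (n + 1) ⊆ C n := by
    intro n x hx
    exact ⟨hx.1, fun k hk => hx.2 k (hk.trans (by exact_mod_cast Nat.le_succ n))⟩
  have hCcl : ∀ n, IsClosed (C n) := by
    intro n
    have h1 : IsClosed {x : ℤ → K | ∀ k, x (k + 1) = g k (x k)} := by
      rw [Set.setOf_forall]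
      exact isClosed_iInter fun k =>
        isClosed_eq (continuous_apply _) ((hgc k).comp (continuous_apply k))
    have h2 : IsClosed {x : ℤ → K |
        ∀ k : ℤ, |k| ≤ (n : ℤ) → dist (x k) ((f.toEquiv ^ k) p) ≤ ε} := by
      rw [Set.setOf_forall]
      refine isClosed_iInter fun k => ?_
      by_cases hk : |k| ≤ (n : ℤ)
      · simp only [hk, true_implies]
        exact isClosed_le (Continuous.dist (continuous_apply k) continuous_const)
          continuous_const
      · simp [hk]
    exact h1.inter h2
  have hCne : ∀ n, (C n).Nonempty := by
    intro n
    set U : Set K := ⋂ k ∈ Finset.Icc (-(n : ℤ)) (n : ℤ),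
      (fun z => (f.toEquiv ^ k) z) ⁻¹' Metric.ball ((f.toEquiv ^ k) p) (ε / 2) with hU
    have hUopen : IsOpen U := by
      refine isOpen_biInter_finset fun k _ => ?_
      exact (Metric.isOpen_ball).preimage (contPow f k)
    have hpU : p ∈ U := by
      simp only [hU, Set.mem_iInter, Set.mem_preimage]
      intro k _
      exact Metric.mem_ball_self (by positivity)
    obtain ⟨q, hqU, hqΦ⟩ := hΦ U (hp U hUopen hpU)
    obtain ⟨x, hxtraj, hxtrace⟩ := hqΦ g hgc hgd
    refine ⟨x, hxtraj, fun k hk => ?_⟩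
    have hkmem : k ∈ Finset.Icc (-(n : ℤ)) (n : ℤ) := by
      rw [Finset.mem_Icc]
      exact ⟨neg_le_of_abs_le hk, le_of_abs_le hk⟩
    have hq : dist ((f.toEquiv ^ k) q) ((f.toEquiv ^ k) p) < ε / 2 := by
      have := Set.mem_iInter.1 hqU k
      have := Set.mem_iInter.1 this hkmem
      simpa [Metric.mem_ball] using this
    calc dist (x k) ((f.toEquiv ^ k) p)
        ≤ dist (x k) ((f.toEquiv ^ k) q) + dist ((f.toEquiv ^ k) q) ((f.toEquiv ^ k) p) :=
          dist_triangle _ _ _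
      _ ≤ ε / 2 + ε / 2 := add_le_add (hxtrace k) hq.le
      _ = ε := by ring
  obtain ⟨x, hx⟩ := IsCompact.nonempty_iInter_of_sequence_nonempty_isCompact_isClosed
    C hC1 hCne ((hCcl 0).isCompact) hCcl
  have hx' : ∀ n, x ∈ C n := Set.mem_iInter.1 hx
  refine ⟨x, (hx' 0).1, fun k => ?_⟩
  exact (hx' |k|.toNat).2 k (by simp [Int.toNat_of_nonneg (abs_nonneg k)])
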